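/- If κ is a weakly shrewd cardinal, then κ is a regular cardinal. -/

import Mathlib

universe u

open Cardinal

/-- Formulas of the language of set theory with an additional unary predicate
symbol `pred`; variables are indexed by natural numbers. -/
inductive SF : Type
  | mem : ℕ → ℕ → SF
  | eq : ℕ → ℕ → SF
  | pred : ℕ → SF
  | not : SF → SF
  | and : SF → SF → SF
  | ex : ℕ → SF → SF

/-- The free variables of a formula. -/
def SF.fv : SF → Set ℕ
  | .mem i j => {i, j}
  | .eq i j => {i, j}
  | .pred i => {i}
  | .not φ => φ.fv
  | .and φ ψ => φ.fv ∪ ψ.fv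
  | .ex k φ => φ.fv \ {k}

/-- Tarskian satisfaction of a formula in the structure whose carrier is the
class `S`, where the membership symbol is interpreted by the binary relation `E`
and the extra unary predicate symbol by the class `P`, under the valuation `v`. -/
def Sat (P : Set ZFSet.{u}) (E : ZFSet.{u} → ZFSet.{u} → Prop) (S : Set ZFSet.{u}) :
    SF → (ℕ → ZFSet.{u}) → Prop
  | .mem i j, v => E (v i) (v j)
  | .eq i j, v => v i = v j
  | .pred i, v => v i ∈ P
  | .not φ, v => ¬ Sat P E S φ v
  | .and φ ψ, v => Sat P E S φ v ∧ Sat P E S ψ v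
  | .ex k φ, v => ∃ x, x ∈ S ∧ Sat P E S φ (Function.update v k x)

/-- Satisfaction in the `∈`-structure with carrier `S`, the predicate symbol
being interpreted by the class `R`. -/
def SatIn (R : Set ZFSet.{u}) (S : Set ZFSet.{u}) (φ : SF) (v : ℕ → ZFSet.{u}) : Prop :=
  Sat R (· ∈ ·) S φ v

/-- Δ₀-formulas: built from atomic formulas by propositional connectives and
bounded existential quantification. -/
inductive IsDeltaZero : SF → Prop
  | mem (i j) : IsDeltaZero (.mem i j)
  | eq (i j) : IsDeltaZero (.eq i j)
  | pred (i) : IsDeltaZero (.pred i)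
  | not {φ} : IsDeltaZero φ → IsDeltaZero (.not φ)
  | and {φ ψ} : IsDeltaZero φ → IsDeltaZero ψ → IsDeltaZero (.and φ ψ)
  | bex {φ} (k j) : IsDeltaZero φ → IsDeltaZero (.ex k (.and (.mem k j) φ))

mutual
  /-- Σₙ-formulas of the Lévy hierarchy. -/
  inductive IsSigma : ℕ → SF → Prop
    | of_zero {φ} : IsDeltaZero φ → IsSigma 0 φ
    | of_pi {n φ} : IsPi n φ → IsSigma (n + 1) φ
    | ex {n φ} (k) : IsSigma (n + 1) φ → IsSigma (n + 1) (.ex k φ)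
  /-- Πₙ-formulas of the Lévy hierarchy. -/
  inductive IsPi : ℕ → SF → Prop
    | of_zero {φ} : IsDeltaZero φ → IsPi 0 φ
    | not {n φ} : IsSigma (n + 1) φ → IsPi (n + 1) (.not φ)
end

/-- The valuation sending `v₀` to `a`, `v₁` to `b` and all other variables to `∅`. -/
def val2 (a b : ZFSet.{u}) : ℕ → ZFSet.{u} := fun i => if i = 0 then a else if i = 1 then b else ∅

/-- `x` is a (von Neumann) ordinal. -/
def ZOrd (x : ZFSet.{u}) : Prop := x.IsTransitive ∧ ∀ y ∈ x, ZFSet.IsTransitive y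

/-- `κ` is a (von Neumann) cardinal. -/
def ZCard (κ : ZFSet.{u}) : Prop := ZOrd κ ∧ ∀ β ∈ κ, #β.toSet < #κ.toSet

/-- `κ` is an infinite cardinal. -/
def InfCard (κ : ZFSet.{u}) : Prop := ZCard κ ∧ ZFSet.omega ⊆ κ

/-- `κ` is an infinite regular cardinal: every cofinal subset of `κ` has
cardinality `κ`. -/
def ZRegular (κ : ZFSet.{u}) : Prop :=
  InfCard κ ∧ ∀ x : ZFSet.{u}, x ⊆ κ →
    (∀ β ∈ κ, ∃ γ ∈ x, β ∈ γ ∨ β = γ) → #x.toSet = #κ.toSet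

/-- `C` is a closed unbounded (class of) subset(s) of the ordinal `κ`. -/
def ZClub (C : Set ZFSet.{u}) (κ : ZFSet.{u}) : Prop :=
  (∀ γ ∈ C, γ ∈ κ) ∧ (∀ β ∈ κ, ∃ γ ∈ C, β ∈ γ) ∧
    (∀ β ∈ κ, (∃ γ, γ ∈ β) → (∀ γ ∈ β, ∃ δ ∈ C, γ ∈ δ ∧ δ ∈ β) → β ∈ C)

/-- `S` is stationary in `κ`: it meets every closed unbounded subset of `κ`. -/
def ZStationary (S : Set ZFSet.{u}) (κ : ZFSet.{u}) : Prop :=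
  ∀ C, ZClub C κ → ∃ γ ∈ C, γ ∈ S

/-- `H(θ)`: the class of all sets hereditarily of cardinality less than `θ`. -/
def HSet (θ : ZFSet.{u}) : Set ZFSet.{u} :=
  {x | ∃ t : ZFSet.{u}, t.IsTransitive ∧ x ⊆ t ∧ #t.toSet < #θ.toSet}

/-- `θ` is the cardinal successor `κ⁺` of `κ`. -/
def SuccCardOf (θ κ : ZFSet.{u}) : Prop :=
  ZCard θ ∧ κ ∈ θ ∧ ∀ μ, ZCard μ → κ ∈ μ → θ ⊆ μ

/-- `κ` is a weakly shrewd cardinal. -/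
def WeaklyShrewd (κ : ZFSet.{u}) : Prop :=
  InfCard κ ∧
    ∀ (φ : SF) (θ A : ZFSet.{u}), φ.fv ⊆ {0, 1} → ZCard θ → κ ∈ θ → A ⊆ κ →
      SatIn ∅ (HSet θ) φ (val2 A κ) →
      ∃ κ' θ' : ZFSet.{u}, ZCard κ' ∧ ZCard θ' ∧ κ' ∈ θ' ∧ κ' ∈ κ ∧
        SatIn ∅ (HSet θ') φ (val2 (A ∩ κ') κ')

/-- `j` is an elementary embedding of the `∈`-structure (with predicate `R`)
with carrier `X` into the one with carrier `Y`. -/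
def ElemEmbOn (R : Set ZFSet.{u}) (X Y : Set ZFSet.{u}) (j : ZFSet.{u} → ZFSet.{u}) : Prop :=
  (∀ x ∈ X, j x ∈ Y) ∧
    ∀ (φ : SF) (v : ℕ → ZFSet.{u}), (∀ i, v i ∈ X) →
      (SatIn R X φ v ↔ SatIn R Y φ (fun i => j (v i)))

/-- `X` is an elementary submodel of `Y` (as `∈`-structures with predicate `R`). -/
def ElemSub (R : Set ZFSet.{u}) (X Y : Set ZFSet.{u}) : Prop :=
  X ⊆ Y ∧ ∀ (φ : SF) (v : ℕ → ZFSet.{u}), (∀ i, v i ∈ X) → (SatIn R X φ v ↔ SatIn R Y φ v)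

/-- `X` is a Σₙ-elementary submodel of `Y`. -/
def SigmaElemSub (R : Set ZFSet.{u}) (n : ℕ) (X Y : Set ZFSet.{u}) : Prop :=
  X ⊆ Y ∧ ∀ (φ : SF), IsSigma n φ → ∀ (v : ℕ → ZFSet.{u}), (∀ i, v i ∈ X) →
    (SatIn R X φ v ↔ SatIn R Y φ v)


section Aux
open Cardinal Ordinal

theorem ZFSet.mem_toSet (a u : ZFSet.{u}) : a ∈ u.toSet ↔ a ∈ u := Iff.rfl

theorem ZFSet.toSet_union (x y : ZFSet.{u}) : (x ∪ y).toSet = x.toSet ∪ y.toSet :=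
  ZFSet.coe_union x y

noncomputable def ordToZF (o : Ordinal.{u}) : ZFSet.{u} :=
  ZFSet.range (fun i : o.ToType => ordToZF ((Ordinal.ToType.mk (o := o)).symm i))
termination_by o
decreasing_by exact ((Ordinal.ToType.mk (o := o)).symm i).2

theorem mem_ordToZF {x : ZFSet.{u}} {o : Ordinal.{u}} :
    x ∈ ordToZF o ↔ ∃ p < o, x = ordToZF p := by
  rw [ordToZF, ZFSet.mem_range]
  constructor
  · rintro ⟨i, rfl⟩
    exact ⟨_, ((Ordinal.ToType.mk (o := o)).symm i).2, rfl⟩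
  · rintro ⟨p, hp, rfl⟩
    exact ⟨(Ordinal.ToType.mk (o := o)) ⟨p, hp⟩, by simp⟩

theorem ordToZF_mem_of_lt {p o : Ordinal.{u}} (h : p < o) : ordToZF p ∈ ordToZF o :=
  mem_ordToZF.2 ⟨p, h, rfl⟩

theorem ordToZF_injective : Function.Injective ordToZF.{u} := by
  intro a b hab
  by_contra hne
  rcases Ne.lt_or_gt hne with h | h
  · have := ordToZF_mem_of_lt h; rw [hab] at this; exact ZFSet.mem_irrefl _ this
  · have := ordToZF_mem_of_lt h; rw [hab] at this; exact ZFSet.mem_irrefl _ this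

theorem ordToZF_mem_iff {p o : Ordinal.{u}} : ordToZF p ∈ ordToZF o ↔ p < o := by
  refine ⟨fun h => ?_, ordToZF_mem_of_lt⟩
  rcases mem_ordToZF.1 h with ⟨q, hq, he⟩
  rwa [ordToZF_injective he]

theorem ordToZF_transitive (o : Ordinal.{u}) : (ordToZF o).IsTransitive := by
  intro y hy z hz
  rcases mem_ordToZF.1 hy with ⟨p, hp, rfl⟩
  rcases mem_ordToZF.1 hz with ⟨q, hq, rfl⟩
  exact ordToZF_mem_of_lt (hq.trans hp)

theorem card_toSet_ordToZF (o : Ordinal.{u}) :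
    #(ordToZF o).toSet = Cardinal.lift.{u+1} o.card := by
  have : (ordToZF o).toSet = Set.range (fun p : o.ToType =>
      ordToZF ((Ordinal.ToType.mk (o := o)).symm p)) := by
    ext z
    simp only [ZFSet.mem_toSet, mem_ordToZF, Set.mem_range]
    constructor
    · rintro ⟨p, hp, rfl⟩
      exact ⟨(Ordinal.ToType.mk (o := o)) ⟨p, hp⟩, by simp⟩
    · rintro ⟨i, rfl⟩
      exact ⟨_, ((Ordinal.ToType.mk (o := o)).symm i).2, rfl⟩
  rw [this]
  have hinj : Function.Injective (fun p : o.ToType =>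
      ordToZF ((Ordinal.ToType.mk (o := o)).symm p)) := by
    intro a b hab
    exact (Ordinal.ToType.mk (o := o)).symm.injective (Subtype.ext (ordToZF_injective hab))
  have := Cardinal.mk_range_eq_of_injective hinj
  rwa [Cardinal.lift_id'.{u,u+1}, Cardinal.mk_toType] at this

theorem ZOrd_ordToZF (o : Ordinal.{u}) : ZOrd (ordToZF o) := by
  refine ⟨ordToZF_transitive o, fun y hy => ?_⟩
  rcases mem_ordToZF.1 hy with ⟨p, _, rfl⟩
  exact ordToZF_transitive p

theorem ZOrd.mem {x y : ZFSet.{u}} (h : ZOrd x) (hy : y ∈ x) : ZOrd y :=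
  ⟨h.2 y hy, fun z hz => h.2 z (h.1 y hy hz)⟩

theorem eq_ordToZF_of_ZOrd : ∀ x : ZFSet.{u}, ZOrd x → ∃ o, x = ordToZF o := by
  intro x
  induction x using ZFSet.inductionOn with
  | _ x IH =>
    intro hx
    set O : Set Ordinal.{u} := {o | ordToZF o ∈ x} with hO
    have hsm : Small.{u} O := by
      have hinj : Function.Injective (fun o : O => (⟨ordToZF o.1, o.2⟩ : x.toSet)) := by
        intro a b hab
        exact Subtype.ext (ordToZF_injective (congrArg Subtype.val hab))
      haveI : Small.{u} x.toSet := ZFSet.small_coe x; exact small_of_injective hinj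
    obtain ⟨b, hb⟩ := Ordinal.bddAbove_of_small (s := O)
    have hcne : Set.Nonempty {o | o ∉ O} :=
      ⟨b + 1, fun hmem => absurd (hb hmem) (by simp)⟩
    set s := sInf {o | o ∉ O} with hs
    have hsnot : s ∉ O := csInf_mem hcne
    have hlt : ∀ o, o < s → o ∈ O := fun o ho => by
      by_contra hno
      exact absurd (csInf_le' (show o ∈ {o | o ∉ O} from hno)) (not_le.2 ho)
    have hdc : ∀ o p, o ∈ O → p < o → p ∈ O := fun o p ho hp =>
      (hx.1 (ordToZF o) ho) (ordToZF_mem_of_lt hp)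
    refine ⟨s, ZFSet.ext fun z => ⟨fun hz => ?_, fun hz => ?_⟩⟩
    · obtain ⟨o, rfl⟩ := IH z hz (ZOrd.mem hx hz)
      have hoO : o ∈ O := hz
      have : o < s := by
        rcases lt_or_ge o s with h | h
        · exact h
        · rcases h.eq_or_lt with h | h
          · exact absurd (h ▸ hoO) hsnot
          · exact absurd (hdc o s hoO h) hsnot
      exact ordToZF_mem_of_lt this
    · rcases mem_ordToZF.1 hz with ⟨p, hp, rfl⟩
      exact hlt p hp

theorem ZCard_ordToZF_ord (c : Cardinal.{u}) : ZCard (ordToZF c.ord) := by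
  refine ⟨ZOrd_ordToZF _, fun β hβ => ?_⟩
  rcases mem_ordToZF.1 hβ with ⟨p, hp, rfl⟩
  rw [card_toSet_ordToZF, card_toSet_ordToZF, Cardinal.card_ord]
  exact Cardinal.lift_lt.2 (Cardinal.lt_ord.1 hp)

theorem ZCard.exists_rep {κ : ZFSet.{u}} (h : ZCard κ) :
    ∃ C : Cardinal.{u}, κ = ordToZF C.ord := by
  obtain ⟨K, rfl⟩ := eq_ordToZF_of_ZOrd κ h.1
  refine ⟨K.card, ?_⟩
  rcases (Cardinal.ord_card_le K).eq_or_lt with he | hlt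
  · rw [he]
  · exfalso
    have := h.2 (ordToZF K.card.ord) (ordToZF_mem_of_lt hlt)
    rw [card_toSet_ordToZF, card_toSet_ordToZF, Cardinal.card_ord] at this
    exact absurd (Cardinal.lift_lt.1 this) (lt_irrefl _)

theorem HSet_transitive {θ : ZFSet.{u}} {x y : ZFSet.{u}} (hx : x ∈ HSet θ) (hy : y ∈ x) :
    y ∈ HSet θ := by
  obtain ⟨t, ht, hxt, hc⟩ := hx
  exact ⟨t, ht, ht y (hxt hy), hc⟩

theorem ordToZF_mem_HSet {o Θ : Ordinal.{u}} (h : o.card < Θ.card) :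
    ordToZF o ∈ HSet (ordToZF Θ) := by
  refine ⟨ordToZF o, ordToZF_transitive o, fun z hz => hz, ?_⟩
  rw [card_toSet_ordToZF, card_toSet_ordToZF]
  exact Cardinal.lift_lt.2 h

theorem ordToZF_zero : ordToZF (0 : Ordinal.{u}) = ∅ := by
  apply ZFSet.ext; intro z
  simp only [mem_ordToZF, ZFSet.notMem_empty, iff_false]
  rintro ⟨p, hp, -⟩
  exact absurd hp (not_lt_of_ge (zero_le (a := p)))

theorem ordToZF_nat (n : ℕ) : ordToZF (n : Ordinal.{u}) ∈ ZFSet.omega.{u} := by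
  induction n with
  | zero => rw [Nat.cast_zero, ordToZF_zero]; exact ZFSet.omega_zero
  | succ n IH =>
    have he : ordToZF ((n + 1 : ℕ) : Ordinal.{u}) = insert (ordToZF n) (ordToZF n) := by
      apply ZFSet.ext; intro z
      rw [mem_ordToZF, ZFSet.mem_insert_iff]
      constructor
      · rintro ⟨p, hp, rfl⟩
        rw [Nat.cast_succ, Ordinal.add_one_eq_succ, Order.lt_succ_iff] at hp
        rcases hp.eq_or_lt with h | h
        · exact Or.inl (by rw [h])
        · exact Or.inr (mem_ordToZF.2 ⟨p, h, rfl⟩)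
      · rintro (rfl | hz)
        · refine ⟨n, ?_, rfl⟩
          rw [Nat.cast_succ, Ordinal.add_one_eq_succ]; exact Order.lt_succ _
        · rcases mem_ordToZF.1 hz with ⟨p, hp, rfl⟩
          refine ⟨p, ?_, rfl⟩
          rw [Nat.cast_succ, Ordinal.add_one_eq_succ]
          exact hp.trans (Order.lt_succ _)
    rw [he]
    exact ZFSet.omega_succ IH

theorem aleph0_le_of_omega_subset {K : Ordinal.{u}} (h : ZFSet.omega.{u} ⊆ ordToZF K) :
    ℵ₀ ≤ K.card := by
  have hinj : Function.Injective (fun n : ℕ => (⟨ordToZF n, h (ordToZF_nat n)⟩ :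
      (ordToZF K).toSet)) := by
    intro a b hab
    exact Nat.cast_injective (ordToZF_injective (congrArg Subtype.val hab))
  have : ℵ₀ ≤ #(ordToZF K).toSet := Cardinal.aleph0_le_mk_iff.2 (Infinite.of_injective _ hinj)
  rwa [card_toSet_ordToZF, Cardinal.aleph0_le_lift] at this

def phiMain : SF := (SF.ex 2 (SF.ex 3 (SF.and (SF.mem 2 0) (SF.and (SF.not (SF.ex 10 (SF.and (SF.mem 10 0) (SF.mem 10 2)))) (SF.and (SF.not (SF.ex 4 (SF.and (SF.mem 4 3) (SF.not (SF.ex 5 (SF.ex 6 (SF.and (SF.mem 5 4) (SF.and (SF.mem 6 4) (SF.and (SF.mem 5 2) (SF.and (SF.mem 6 0) (SF.and (SF.mem 5 6) (SF.not (SF.ex 11 (SF.and (SF.mem 11 4) (SF.and (SF.not (SF.eq 11 5)) (SF.not (SF.eq 11 6))))))))))))))))) (SF.and (SF.not (SF.ex 5 (SF.and (SF.mem 5 2) (SF.not (SF.ex 4 (SF.and (SF.mem 4 3) (SF.mem 5 4))))))) (SF.not (SF.ex 4 (SF.and (SF.mem 4 3) (SF.ex 7 (SF.and (SF.mem 7 3)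 (SF.ex 5 (SF.ex 6 (SF.ex 8 (SF.ex 9 (SF.and (SF.mem 5 4) (SF.and (SF.mem 6 4) (SF.and (SF.mem 8 7) (SF.and (SF.mem 9 7) (SF.and (SF.mem 5 6) (SF.and (SF.mem 8 9) (SF.and (SF.mem 5 8) (SF.not (SF.mem 6 9))))))))))))))))))))))))

theorem phiMain_fv : phiMain.fv ⊆ {0, 1} := by
  intro i hi
  simp [phiMain, SF.fv] at hi
  simp only [Set.mem_insert_iff, Set.mem_singleton_iff]
  omega

theorem satPhi_iff {S : Set ZFSet.{u}} {A k : ZFSet.{u}} :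
    SatIn ∅ S phiMain (val2 A k) ↔
      ∃ m, m ∈ S ∧ ∃ F, F ∈ S ∧ (m ∈ A ∧ ((¬ ∃ y, y ∈ S ∧ (y ∈ A ∧ y ∈ m)) ∧ ((¬ ∃ p, p ∈ S ∧ (p ∈ F ∧ ¬ (∃ a, a ∈ S ∧ ∃ b, b ∈ S ∧ (a ∈ p ∧ (b ∈ p ∧ (a ∈ m ∧ (b ∈ A ∧ (a ∈ b ∧ ¬ ∃ z, z ∈ S ∧ (z ∈ p ∧ (¬ z = a ∧ ¬ z = b)))))))))) ∧ ((¬ ∃ a, a ∈ S ∧ (a ∈ m ∧ ¬ ∃ p, p ∈ S ∧ (p ∈ F ∧ a ∈ p))) ∧ (¬ ∃ p, p ∈ S ∧ (p ∈ F ∧ ∃ q, q ∈ S ∧ (q ∈ F ∧ ∃ a, a ∈ S ∧ ∃ b, b ∈ S ∧ ∃ c, c ∈ S ∧ ∃ d, d ∈ S ∧ (a ∈ p ∧ (b ∈ p ∧ (c ∈ q ∧ (d ∈ q ∧ (a ∈ b ∧ (c ∈ d ∧ (a ∈ c ∧ ¬ b ∈ d)))))))))))))) := by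
  simp [SatIn, Sat, phiMain, val2, Function.update_apply, and_assoc]

theorem ord_le_of_strictMonoOn {lam : Ordinal.{u}} {G : Ordinal.{u} → Ordinal.{u}}
    (hG : ∀ a b, a < b → b < lam → G a < G b) : ∀ a < lam, a ≤ G a := by
  intro a
  induction a using Ordinal.induction with
  | h a IH =>
    intro ha
    by_contra hlt
    push_neg at hlt
    exact absurd ((IH _ hlt (hlt.trans ha)).trans_lt (hG _ _ hlt ha)) (lt_irrefl _)

theorem card_toSet_range_le {α : Type u} (f : α → ZFSet.{u}) :
    #(ZFSet.range f).toSet ≤ Cardinal.lift.{u+1} #α := by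
  have he : (ZFSet.range f).toSet = Set.range f := by
    ext z
    rw [ZFSet.mem_toSet, ZFSet.mem_range]
    exact Set.mem_range.symm
  rw [he]
  have h2 := Cardinal.mk_range_le_lift (f := f)
  rwa [Cardinal.lift_id'.{u, u+1}] at h2


end Aux

/-- If `κ` is a weakly shrewd cardinal, then `κ` is a regular cardinal. -/
theorem weaklyShrewd_regular (κ : ZFSet.{u}) (h : WeaklyShrewd κ) : ZRegular κ := by
  classical
  obtain ⟨hinf, hshrewd⟩ := h
  obtain ⟨C, rfl⟩ := hinf.1.exists_rep
  set K : Ordinal.{u} := C.ord with hKdef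
  refine ⟨hinf, fun x hxsub hxcof => ?_⟩
  have hCinf : ℵ₀ ≤ C := by
    have := aleph0_le_of_omega_subset hinf.2
    rwa [Cardinal.card_ord] at this
  have hKlim : Order.IsSuccLimit K := Cardinal.isSuccLimit_ord hCinf
  have hle : #x.toSet ≤ #(ordToZF K).toSet :=
    Cardinal.mk_le_mk_of_subset (fun z hz => hxsub ((ZFSet.mem_toSet _ _).1 hz))
  rcases hle.eq_or_lt with heq | hlt
  · exact heq
  exfalso
  -- every element of x is an ordinal below K
  have hox : ∀ z ∈ x, ∃ o, o < K ∧ z = ordToZF o := by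
    intro z hz
    obtain ⟨o, rfl⟩ := eq_ordToZF_of_ZOrd z (ZOrd.mem (ZOrd_ordToZF K) (hxsub hz))
    exact ⟨o, ordToZF_mem_iff.1 (hxsub hz), rfl⟩
  -- cofinality bound
  have hcof : K.cof < C := by
    have hsm : Small.{u} x.toSet := ZFSet.small_coe x
    set g : Shrink.{u} x.toSet → Ordinal.{u} := fun i =>
      Classical.choose (hox ((equivShrink x.toSet).symm i).1
        ((ZFSet.mem_toSet _ _).1 ((equivShrink x.toSet).symm i).2)) with hgdef
    have hg : ∀ i, g i < K ∧ ((equivShrink x.toSet).symm i).1 = ordToZF (g i) := fun i =>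
      Classical.choose_spec (hox ((equivShrink x.toSet).symm i).1
        ((ZFSet.mem_toSet _ _).1 ((equivShrink x.toSet).symm i).2))
    have hlsub : Ordinal.lsub g = K := by
      apply le_antisymm
      · exact Ordinal.lsub_le fun i => (hg i).1
      · refine le_of_forall_lt fun β hβ => ?_
        obtain ⟨γ, hγx, hor⟩ := hxcof (ordToZF β) (ordToZF_mem_of_lt hβ)
        set i := equivShrink x.toSet ⟨γ, (ZFSet.mem_toSet _ _).2 hγx⟩ with hidef
        have hγ : γ = ordToZF (g i) := by
          have := (hg i).2
          rwa [hidef, Equiv.symm_apply_apply] at this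
        have hβle : β ≤ g i := by
          rcases hor with hmem | heq2
          · exact (ordToZF_mem_iff.1 (hγ ▸ hmem)).le
          · exact le_of_eq (ordToZF_injective (heq2.trans hγ))
        exact hβle.trans_lt (Ordinal.lt_lsub g i)
    have h3 := Cardinal.lift_mk_shrink.{u+1, u, 0} x.toSet
    have hlift : Cardinal.lift.{u+1} #(Shrink.{u} x.toSet) = #x.toSet := by
      rw [Cardinal.lift_id'.{u, u+1}] at h3
      exact h3
    have hxlt : Cardinal.lift.{u+1} #(Shrink.{u} x.toSet) < Cardinal.lift.{u+1} C := by
      rw [hlift]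
      calc #x.toSet < #(ordToZF K).toSet := hlt
      _ = Cardinal.lift.{u+1} K.card := card_toSet_ordToZF K
      _ = Cardinal.lift.{u+1} C := by rw [hKdef, Cardinal.card_ord]
    have h4 := Ordinal.cof_lsub_le g
    rw [hlsub] at h4
    exact h4.trans_lt (Cardinal.lift_lt.1 hxlt)
  set c : Ordinal.{u} := K.cof.ord with hcdef
  have hccard : c.card = K.cof := Cardinal.card_ord _
  have hcC : c < K := Cardinal.ord_lt_ord.2 hcof
  have hcinf : ℵ₀ ≤ K.cof := Ordinal.aleph0_le_cof.2 hKlim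
  have hc0 : 0 < c := by
    have h2 := Cardinal.ord_lt_ord.2 (Cardinal.aleph0_pos.trans_le hcinf)
    rw [Cardinal.ord_zero] at h2; exact h2
  obtain ⟨f, hf⟩ := Ordinal.exists_fundamental_sequence K
  set lam : Ordinal.{u} := c + c with hlamdef
  set B : Ordinal.{u} := lam + c with hBdef
  have hltK : ∀ {o : Ordinal.{u}}, o.card < C → o < K := fun ho => Cardinal.lt_ord.2 ho
  have hcardc : c.card < C := by rw [hccard]; exact hcof
  have hlamK : lam < K := hltK (by rw [Ordinal.card_add]; exact Cardinal.add_lt_of_lt hCinf hcardc hcardc)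
  have hlamcard : lam.card < C := by rw [Ordinal.card_add]; exact Cardinal.add_lt_of_lt hCinf hcardc hcardc
  have hBcard : B.card < C := by
    rw [Ordinal.card_add]; exact Cardinal.add_lt_of_lt hCinf hlamcard hcardc
  have hBK : B < K := hltK hBcard
  set fo : Ordinal.{u} → Ordinal.{u} := fun b => if hb : b < c then f b hb else 0 with hfodef
  have hfoK : ∀ b, fo b < K := by
    intro b
    rw [hfodef]
    dsimp only
    split
    · rw [← hf.blsub_eq]; exact Ordinal.lt_blsub _ _ _
    · exact hKlim.pos
  have hfomono : ∀ a b, a < b → b < c → fo a < fo b := by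
    intro a b hab hb
    have ha : a < c := hab.trans hb
    rw [hfodef]
    dsimp only
    rw [dif_pos ha, dif_pos hb]
    exact hf.2.1 ha hb hab
  set inS : Ordinal.{u} → Prop :=
    fun σ => (lam ≤ σ ∧ σ < B) ∨ ∃ b, b < c ∧ σ = B + fo b with hinSdef
  have hSK : ∀ σ, inS σ → σ < K := by
    intro σ hσ
    rcases hσ with ⟨-, hσB⟩ | ⟨b, hb, rfl⟩
    · exact hσB.trans hBK
    · refine hltK ?_
      rw [Ordinal.card_add]
      exact Cardinal.add_lt_of_lt hCinf hBcard (Cardinal.lt_ord.1 (hfoK b))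
  set h' : Ordinal.{u} → Ordinal.{u} :=
    fun α => if α < c then lam + α else B + fo (α - c) with h'def
  have hrange : ∀ α, α < lam → inS (h' α) := by
    intro α hα
    rw [h'def]; dsimp only
    split
    · exact Or.inl ⟨le_self_add, add_lt_add_right (by assumption) _⟩
    · rename_i hnlt
      have hca : c ≤ α := not_lt.1 hnlt
      refine Or.inr ⟨α - c, ?_, rfl⟩
      have := Ordinal.add_sub_cancel_of_le hca
      have hlt2 : c + (α - c) < c + c := by rw [this]; exact hα
      exact (add_lt_add_iff_left c).1 hlt2
  have hmono : ∀ α β, α < β → β < lam → h' α < h' β := by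
    intro α β hab hβ
    rw [h'def]; dsimp only
    rcases lt_or_ge α c with hα | hα
    · rcases lt_or_ge β c with hβc | hβc
      · rw [if_pos hα, if_pos hβc]; exact add_lt_add_right hab _
      · rw [if_pos hα, if_neg (not_lt.2 hβc)]
        calc lam + α < lam + c := add_lt_add_right hα _
        _ ≤ B + fo (β - c) := le_self_add
    · have hβc : c ≤ β := hα.trans hab.le
      rw [if_neg (not_lt.2 hα), if_neg (not_lt.2 hβc)]
      refine add_lt_add_right ?_ _
      refine hfomono _ _ ?_ ?_
      · have h1 := Ordinal.add_sub_cancel_of_le hα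
        have h2 := Ordinal.add_sub_cancel_of_le hβc
        have : c + (α - c) < c + (β - c) := by rw [h1, h2]; exact hab
        exact (add_lt_add_iff_left c).1 this
      · have h2 := Ordinal.add_sub_cancel_of_le hβc
        have : c + (β - c) < c + c := by rw [h2]; exact hβ
        exact (add_lt_add_iff_left c).1 this
  have hmin : ∀ σ, inS σ → lam ≤ σ := by
    intro σ hσ
    rcases hσ with ⟨h1, -⟩ | ⟨b, hb, rfl⟩
    · exact h1
    · exact (le_self_add (a := lam) (b := c)).trans le_self_add
  have hsurj : ∀ σ, inS σ → ∃ α, α < lam ∧ h' α = σ := by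
    intro σ hσ
    rcases hσ with ⟨h1, h2⟩ | ⟨b, hb, rfl⟩
    · have heq0 := Ordinal.add_sub_cancel_of_le h1
      have hαc : σ - lam < c := by
        have hlt2 : lam + (σ - lam) < lam + c := by rw [heq0]; exact h2
        exact (add_lt_add_iff_left lam).1 hlt2
      refine ⟨σ - lam, hαc.trans_le (le_self_add (a := c) (b := c)), ?_⟩
      rw [h'def]; dsimp only
      rw [if_pos hαc]
      exact heq0
    · refine ⟨c + b, add_lt_add_right hb _, ?_⟩
      rw [h'def]; dsimp only
      rw [if_neg (not_lt.2 (le_self_add (a := c) (b := b))), Ordinal.add_sub_cancel]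
  have hlamS : inS lam := Or.inl ⟨le_refl _, by
    have h2 := add_lt_add_right hc0 lam
    rw [add_zero] at h2
    exact h2⟩
  have hunb : ∀ β, β < K → ∃ σ, inS σ ∧ β < σ := by
    intro β hβ
    have hsucc : β + 1 < K := by
      rw [Ordinal.add_one_eq_succ]
      exact hKlim.succ_lt hβ
    rw [← hf.blsub_eq] at hsucc
    obtain ⟨b, hb, hble⟩ := Ordinal.lt_blsub_iff.1 hsucc
    refine ⟨B + fo b, Or.inr ⟨b, hb, rfl⟩, ?_⟩
    have hfb : fo b = f b hb := dif_pos hb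
    have hblt : β < f b hb := by
      have h1 : β + 1 ≤ f b hb := hble
      have h0 : β < β + 1 := by
        rw [Ordinal.add_one_eq_succ]; exact Order.lt_succ β
      exact h0.trans_le h1
    calc β < f b hb := hblt
    _ = fo b := hfb.symm
    _ ≤ B + fo b := le_add_self
  -- ZFSet-level objects
  set AZ : ZFSet.{u} := ZFSet.sep (fun z => ∃ σ, inS σ ∧ z = ordToZF σ) (ordToZF K) with hAZdef
  have hmemAZ : ∀ z, z ∈ AZ ↔ ∃ σ, inS σ ∧ z = ordToZF σ := by
    intro z
    rw [hAZdef, ZFSet.mem_sep]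
    constructor
    · exact And.right
    · rintro ⟨σ, hσ, rfl⟩
      exact ⟨ordToZF_mem_of_lt (hSK σ hσ), σ, hσ, rfl⟩
  have hAsub : AZ ⊆ ordToZF K := fun z hz => (ZFSet.mem_sep.1 hz).1
  set mZ : ZFSet.{u} := ordToZF lam with hmZdef
  set FZ : ZFSet.{u} := ZFSet.range (fun i : lam.ToType =>
    ({ordToZF (((Ordinal.ToType.mk (o := lam)).symm i : Set.Iio lam) : Ordinal),
      ordToZF (h' (((Ordinal.ToType.mk (o := lam)).symm i : Set.Iio lam) : Ordinal))} : ZFSet))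
    with hFZdef
  have hmemFZ : ∀ y, y ∈ FZ ↔
      ∃ α, α < lam ∧ y = ({ordToZF α, ordToZF (h' α)} : ZFSet) := by
    intro y
    rw [hFZdef, ZFSet.mem_range]
    constructor
    · rintro ⟨i, rfl⟩
      exact ⟨_, ((Ordinal.ToType.mk (o := lam)).symm i).2, rfl⟩
    · rintro ⟨α, hα, rfl⟩
      exact ⟨Ordinal.ToType.mk (o := lam) ⟨α, hα⟩, by simp⟩
  set Θ : Ordinal.{u} := (Order.succ C).ord with hΘdef
  set θZ : ZFSet.{u} := ordToZF Θ with hθZdef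
  have hCΘ : C < Θ.card := by rw [hΘdef, Cardinal.card_ord]; exact Order.lt_succ C
  have hθcard : ZCard θZ := ZCard_ordToZF_ord _
  have hκθ : ordToZF K ∈ θZ :=
    ordToZF_mem_of_lt (by rw [hΘdef, hKdef]; exact Cardinal.ord_lt_ord.2 (Order.lt_succ C))
  have hκH : ordToZF K ∈ HSet θZ :=
    ordToZF_mem_HSet (by rw [hKdef, Cardinal.card_ord]; exact hCΘ)
  have hmH : mZ ∈ HSet θZ := ordToZF_mem_HSet (hlamcard.trans hCΘ)
  have hFZsub : ∀ y ∈ FZ, y ⊆ ordToZF K := by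
    intro y hy z hz
    obtain ⟨α, hα, rfl⟩ := (hmemFZ y).1 hy
    rcases ZFSet.mem_pair.1 hz with rfl | rfl
    · exact ordToZF_mem_of_lt (hα.trans hlamK)
    · exact ordToZF_mem_of_lt (hSK _ (hrange α hα))
  have hFH : FZ ∈ HSet θZ := by
    refine ⟨ordToZF K ∪ FZ, ?_, fun z hz => ZFSet.mem_union.2 (Or.inr hz), ?_⟩
    · intro y hy
      rcases ZFSet.mem_union.1 hy with hy | hy
      · exact fun z hz => ZFSet.mem_union.2 (Or.inl (ordToZF_transitive K _ hy hz))
      · exact fun z hz => ZFSet.mem_union.2 (Or.inl (hFZsub y hy hz))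
    · rw [hθZdef, card_toSet_ordToZF]
      calc #(ordToZF K ∪ FZ).toSet ≤ #(ordToZF K).toSet + #FZ.toSet := by
            rw [ZFSet.toSet_union]; exact Cardinal.mk_union_le _ _
      _ ≤ Cardinal.lift.{u+1} C + Cardinal.lift.{u+1} lam.card := by
            refine add_le_add ?_ ?_
            · rw [card_toSet_ordToZF, hKdef, Cardinal.card_ord]
            · exact (card_toSet_range_le _).trans (by rw [Cardinal.mk_toType])
      _ ≤ Cardinal.lift.{u+1} C + Cardinal.lift.{u+1} C :=
            add_le_add le_rfl (Cardinal.lift_le.2 hlamcard.le)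
      _ = Cardinal.lift.{u+1} C := Cardinal.add_eq_self (by
            rw [← Cardinal.lift_aleph0.{u+1, u}]; exact Cardinal.lift_le.2 hCinf)
      _ < Cardinal.lift.{u+1} Θ.card := Cardinal.lift_lt.2 hCΘ
  have hdec : ∀ γ, γ < lam → ∀ aa bb : ZFSet.{u},
      aa ∈ ({ordToZF γ, ordToZF (h' γ)} : ZFSet) →
      bb ∈ ({ordToZF γ, ordToZF (h' γ)} : ZFSet) → aa ∈ bb →
      aa = ordToZF γ ∧ bb = ordToZF (h' γ) := by
    intro γ hγ aa bb ha hb hab2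
    have hγh : γ < h' γ := hγ.trans_le (hmin _ (hrange γ hγ))
    rcases ZFSet.mem_pair.1 ha with rfl | rfl <;> rcases ZFSet.mem_pair.1 hb with rfl | rfl
    · exact absurd hab2 (ZFSet.mem_irrefl _)
    · exact ⟨rfl, rfl⟩
    · exact absurd (ordToZF_mem_iff.1 hab2) (not_lt.2 hγh.le)
    · exact absurd hab2 (ZFSet.mem_irrefl _)
  -- the satisfaction statement in H(θ)
  have hsat : SatIn ∅ (HSet θZ) phiMain (val2 AZ (ordToZF K)) := by
    rw [satPhi_iff]
    refine ⟨mZ, hmH, FZ, hFH, (hmemAZ mZ).2 ⟨lam, hlamS, rfl⟩, ?_, ?_, ?_, ?_⟩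
    · rintro ⟨y, -, hyA, hym⟩
      obtain ⟨σ, hσ, rfl⟩ := (hmemAZ y).1 hyA
      exact absurd (ordToZF_mem_iff.1 hym) (not_lt.2 (hmin σ hσ))
    · rintro ⟨p, hpH, hpF, hno⟩
      obtain ⟨α, hα, rfl⟩ := (hmemFZ p).1 hpF
      refine hno ⟨ordToZF α, HSet_transitive hpH (ZFSet.mem_pair.2 (Or.inl rfl)),
        ordToZF (h' α), HSet_transitive hpH (ZFSet.mem_pair.2 (Or.inr rfl)),
        ZFSet.mem_pair.2 (Or.inl rfl), ZFSet.mem_pair.2 (Or.inr rfl),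
        ordToZF_mem_of_lt hα, (hmemAZ _).2 ⟨h' α, hrange α hα, rfl⟩,
        ordToZF_mem_of_lt (hα.trans_le (hmin _ (hrange α hα))), ?_⟩
      rintro ⟨z, -, hzp, hza, hzb⟩
      rcases ZFSet.mem_pair.1 hzp with rfl | rfl
      · exact hza rfl
      · exact hzb rfl
    · rintro ⟨a, haH, ham, hno⟩
      obtain ⟨α, hα, rfl⟩ := mem_ordToZF.1 ham
      exact hno ⟨{ordToZF α, ordToZF (h' α)},
        HSet_transitive hFH ((hmemFZ _).2 ⟨α, hα, rfl⟩),
        (hmemFZ _).2 ⟨α, hα, rfl⟩, ZFSet.mem_pair.2 (Or.inl rfl)⟩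
    · rintro ⟨p, -, hpF, q, -, hqF, a, -, b, -, cc, -, d, -, hap, hbp, hcq, hdq, hab, hcd,
        hac, hbd⟩
      obtain ⟨α, hα, rfl⟩ := (hmemFZ p).1 hpF
      obtain ⟨β, hβ, rfl⟩ := (hmemFZ q).1 hqF
      obtain ⟨rfl, rfl⟩ := hdec α hα a b hap hbp hab
      obtain ⟨rfl, rfl⟩ := hdec β hβ cc d hcq hdq hcd
      exact hbd (ordToZF_mem_of_lt (hmono α β (ordToZF_mem_iff.1 hac) hβ))
  obtain ⟨κ', θ', hκ'c, hθ'c, hκ'θ', hκ'κ, hsat'⟩ :=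
    hshrewd phiMain θZ AZ phiMain_fv hθcard hκθ hAsub hsat
  -- κ' is an ordinal below K
  obtain ⟨K', rfl⟩ := eq_ordToZF_of_ZOrd κ' (ZOrd.mem (ZOrd_ordToZF K) hκ'κ)
  have hK'K : K' < K := ordToZF_mem_iff.1 hκ'κ
  have hκ'H : ordToZF K' ∈ HSet θ' :=
    ⟨ordToZF K', ordToZF_transitive K', fun z hz => hz, hθ'c.2 _ hκ'θ'⟩
  rw [satPhi_iff] at hsat'
  obtain ⟨m', hm'H, F', hF'H, hm'A, hc2, hc3, hc4, hc5⟩ := hsat'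
  have hm'mem := ZFSet.mem_inter.1 hm'A
  obtain ⟨μ, hμS, rfl⟩ := (hmemAZ m').1 hm'mem.1
  have hμK' : μ < K' := ordToZF_mem_iff.1 hm'mem.2
  have hlamμ : lam ≤ μ := hmin μ hμS
  have hlamK' : lam < K' := hlamμ.trans_lt hμK'
  have hy0 : ordToZF lam ∈ AZ ∩ ordToZF K' :=
    ZFSet.mem_inter.2 ⟨(hmemAZ _).2 ⟨lam, hlamS, rfl⟩, ordToZF_mem_of_lt hlamK'⟩
  have hy0H : ordToZF lam ∈ HSet θ' :=
    HSet_transitive hκ'H (ordToZF_mem_of_lt hlamK')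
  have hμlam : μ = lam := by
    by_contra hne
    have hlt2 : lam < μ := hlamμ.lt_of_ne (Ne.symm hne)
    exact hc2 ⟨ordToZF lam, hy0H, hy0, ordToZF_mem_of_lt hlt2⟩
  subst hμlam
  have key : ∀ α, α < lam → ∃ g, inS g ∧ g < K' ∧
      ∃ p, p ∈ HSet θ' ∧ p ∈ F' ∧ ordToZF α ∈ p ∧ ordToZF g ∈ p ∧
        ordToZF α ∈ ordToZF g := by
    intro α hα
    have haH : ordToZF α ∈ HSet θ' := HSet_transitive hm'H (ordToZF_mem_of_lt hα)
    have ham : ordToZF α ∈ ordToZF lam := ordToZF_mem_of_lt hα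
    have hp : ∃ p, p ∈ HSet θ' ∧ (p ∈ F' ∧ ordToZF α ∈ p) := by
      by_contra hno
      exact hc4 ⟨ordToZF α, haH, ham, hno⟩
    obtain ⟨p, hpH, hpF, hαp⟩ := hp
    have h3 : ∃ a, a ∈ HSet θ' ∧ ∃ b, b ∈ HSet θ' ∧ (a ∈ p ∧ (b ∈ p ∧
        (a ∈ ordToZF lam ∧ (b ∈ AZ ∩ ordToZF K' ∧ (a ∈ b ∧
        ¬ ∃ z, z ∈ HSet θ' ∧ (z ∈ p ∧ (¬ z = a ∧ ¬ z = b))))))) := by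
      by_contra hno
      exact hc3 ⟨p, hpH, hpF, hno⟩
    obtain ⟨a, haH2, b, hbH, hap, hbp, ham2, hbA, hab, hz⟩ := h3
    have hza : ordToZF α = a ∨ ordToZF α = b := by
      by_contra hno
      push_neg at hno
      exact hz ⟨ordToZF α, haH, hαp, hno.1, hno.2⟩
    have hane : ordToZF α ≠ b := by
      rintro rfl
      exact hc2 ⟨ordToZF α, haH, hbA, ham⟩
    have ha : a = ordToZF α := by
      rcases hza with h2 | h2
      · exact h2.symm
      · exact absurd h2 hane
    have hbmem := ZFSet.mem_inter.1 hbA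
    obtain ⟨g, hgS, rfl⟩ := (hmemAZ b).1 hbmem.1
    exact ⟨g, hgS, ordToZF_mem_iff.1 hbmem.2, p, hpH, hpF, hαp, hbp, ha ▸ hab⟩
  set G : Ordinal.{u} → Ordinal.{u} := fun α =>
    if hα : α < lam then Classical.choose (key α hα) else 0 with hGdef
  have hGspec : ∀ α, α < lam → inS (G α) ∧ G α < K' ∧
      ∃ p, p ∈ HSet θ' ∧ p ∈ F' ∧ ordToZF α ∈ p ∧ ordToZF (G α) ∈ p ∧
        ordToZF α ∈ ordToZF (G α) := by
    intro α hα
    rw [hGdef]; dsimp only; rw [dif_pos hα]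
    exact Classical.choose_spec (key α hα)
  have hGmono : ∀ α β, α < β → β < lam → G α < G β := by
    intro α β hαβ hβ
    have hα := hαβ.trans hβ
    obtain ⟨hgSα, hgK'α, p, hpH, hpF, hap, hgp, hag⟩ := hGspec α hα
    obtain ⟨hgSβ, hgK'β, q, hqH, hqF, hbq, hgq, hbg⟩ := hGspec β hβ
    by_contra hno
    apply hc5
    refine ⟨p, hpH, hpF, q, hqH, hqF, ordToZF α, HSet_transitive hpH hap,
      ordToZF (G α), HSet_transitive hpH hgp, ordToZF β, HSet_transitive hqH hbq,
      ordToZF (G β), HSet_transitive hqH hgq, hap, hgp, hbq, hgq, hag, hbg,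
      ordToZF_mem_of_lt hαβ, fun hmem => hno (ordToZF_mem_iff.1 hmem)⟩
  by_cases hcase : ∃ σ, inS σ ∧ K' ≤ σ
  · obtain ⟨σ0, hσ0S, hσ0K⟩ := hcase
    set E : Set Ordinal.{u} := {α | α < lam ∧ K' ≤ h' α} with hEdef
    have hEne : E.Nonempty := by
      obtain ⟨α, hα, hh⟩ := hsurj σ0 hσ0S
      exact ⟨α, hα, by rw [hh]; exact hσ0K⟩
    set α₀ := sInf E with hα₀def
    have hα₀E : α₀ ∈ E := csInf_mem hEne
    have hqex : ∀ α, α < lam → ∃ β, β < lam ∧ h' β = G α := fun α hα =>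
      hsurj _ (hGspec α hα).1
    set Q : Ordinal.{u} → Ordinal.{u} := fun α =>
      if hα : α < lam then Classical.choose (hqex α hα) else 0 with hQdef
    have hQspec : ∀ α, α < lam → Q α < lam ∧ h' (Q α) = G α := by
      intro α hα
      rw [hQdef]; dsimp only; rw [dif_pos hα]
      exact Classical.choose_spec (hqex α hα)
    have hQmono : ∀ a b, a < b → b < lam → Q a < Q b := by
      intro a b hab hb
      have ha := hab.trans hb
      obtain ⟨hQa, hha⟩ := hQspec a ha
      obtain ⟨hQb, hhb⟩ := hQspec b hb
      rcases lt_trichotomy (Q a) (Q b) with h2 | h2 | h2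
      · exact h2
      · exfalso
        have heq2 : G a = G b := by rw [← hha, ← hhb, h2]
        exact absurd (hGmono a b hab hb) (by rw [heq2]; exact lt_irrefl _)
      · exfalso
        have h6 := hmono _ _ h2 hQa
        rw [hha, hhb] at h6
        exact absurd (hGmono a b hab hb) (not_lt.2 h6.le)
    have hQlt : ∀ α, α < lam → Q α < α₀ := by
      intro α hα
      obtain ⟨hQα, hhα⟩ := hQspec α hα
      by_contra hno
      push_neg at hno
      have h5 : h' α₀ ≤ h' (Q α) := by
        rcases hno.eq_or_lt with heq2 | hlt2
        · exact le_of_eq (by rw [heq2])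
        · exact (hmono _ _ hlt2 hQα).le
      rw [hhα] at h5
      exact absurd ((hα₀E.2).trans h5) (not_le.2 (hGspec α hα).2.1)
    have h7 := ord_le_of_strictMonoOn hQmono α₀ hα₀E.1
    exact absurd (h7.trans_lt (hQlt α₀ hα₀E.1)) (lt_irrefl _)
  · push_neg at hcase
    obtain ⟨σ, hσS, hσK⟩ := hunb K' hK'K
    exact absurd hσK (not_lt.2 (hcase σ hσS).le)
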